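/- Let π̄* be an optimal policy of the cost-based MDP M̄ (minimizing the expected discounted cost from every state), with value functions Q̄* and V̄*, and set Ā*(s,a) = Q̄*(s,a) − Q̄*(s, π̄*). Let G = (Q̄, μ, 0) be an admissible intervention rule with threshold 0 satisfying Q̄(d_0, μ) = V̄*(d_0), let π be any policy, and let π' = G(π) be the shielded policy. Then for every state s with d^{π'}(s) > 0 and every a ∈ A, Ā(s,a) ≥ Ā*(s,a). -/

import Mathlib

open scoped BigOperators Classical
set_option linter.unusedSectionVars false
set_option linter.unusedVariables false

noncomputable section

namespace SafeRL

variable {S A : Type*} [Fintype S] [Fintype A] [Nonempty A]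

/-- `d` is a probability distribution on the finite type `S`. -/
def IsDist (d : S → ℝ) : Prop := (∀ s, 0 ≤ d s) ∧ ∑ s, d s = 1

/-- `P` is a transition kernel. -/
def IsKernel (P : S → A → S → ℝ) : Prop := ∀ s a, IsDist (P s a)

/-- `π` is a (Markov stationary stochastic) policy. -/
def IsPolicy (π : S → A → ℝ) : Prop := ∀ s, (∀ a, 0 ≤ π s a) ∧ ∑ a, π s a = 1

/-- Point mass at `s`. -/
def pureDist (s : S) : S → ℝ := fun s' => if s' = s then 1 else 0

/-- One-step state-distribution update under policy `π`. -/
def step (P : S → A → S → ℝ) (π : S → A → ℝ) (d : S → ℝ) : S → ℝ :=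
  fun s' => ∑ s, ∑ a, d s * π s a * P s a s'

/-- State distribution at time `t` when running `π` from `d0`. -/
def distAt (P : S → A → S → ℝ) (π : S → A → ℝ) (d0 : S → ℝ) (t : ℕ) : S → ℝ :=
  (step P π)^[t] d0

/-- Expected discounted return `V^π(d0)` of policy `π` from initial distribution `d0`. -/
def value (P : S → A → S → ℝ) (π : S → A → ℝ) (r : S → A → ℝ) (γ : ℝ) (d0 : S → ℝ) : ℝ :=
  ∑' t : ℕ, γ ^ t * ∑ s, ∑ a, distAt P π d0 t s * π s a * r s a

/-- State value function `V^π(s)`. -/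
def vf (P : S → A → S → ℝ) (π : S → A → ℝ) (r : S → A → ℝ) (γ : ℝ) (s : S) : ℝ :=
  value P π r γ (pureDist s)

/-- State-action value function `Q^π(s,a)`. -/
def qf (P : S → A → S → ℝ) (π : S → A → ℝ) (r : S → A → ℝ) (γ : ℝ) (s : S) (a : A) : ℝ :=
  r s a + γ * ∑ s', P s a s' * vf P π r γ s'

/-- The cost function `c(s,a) = 1{s = s_▷}` of the cost-based MDP. -/
def cost (sbad : S) : S → A → ℝ := fun s _ => if s = sbad then 1 else 0

/-- Discounted state distribution `d^π(s)`. -/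
def dsd (P : S → A → S → ℝ) (π : S → A → ℝ) (γ : ℝ) (d0 : S → ℝ) (s : S) : ℝ :=
  (1 - γ) * ∑' t : ℕ, γ ^ t * distAt P π d0 t s

/-- Discounted state-action distribution `d^π(s,a)`. -/
def dsa (P : S → A → S → ℝ) (π : S → A → ℝ) (γ : ℝ) (d0 : S → ℝ) (s : S) (a : A) : ℝ :=
  (1 - γ) * ∑' t : ℕ, γ ^ t * distAt P π d0 t s * π s a

/-- Probability of the `h`-step trajectory prefix `f` when running `π` from `d`. -/
def prefProb (P : S → A → S → ℝ) (π : S → A → ℝ) :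
    (S → ℝ) → (h : ℕ) → (Fin h → S × A) → ℝ
  | _, 0, _ => 1
  | d, h + 1, f =>
      d (f 0).1 * π (f 0).1 (f 0).2 *
        prefProb P π (P (f 0).1 (f 0).2) h (fun i => f i.succ)

/-- Probability that the `h`-step trajectory prefix generated by `π` from `d0` satisfies `E`. -/
def eventProb (P : S → A → S → ℝ) (π : S → A → ℝ) (d0 : S → ℝ) (h : ℕ)
    (E : (Fin h → S × A) → Prop) : ℝ :=
  ∑ f : Fin h → S × A, if E f then prefProb P π d0 h f else 0

/-- `Q̄(s,μ) = E_{a ∼ μ(·|s)} Q̄(s,a)`. -/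
def Qpol (Qb : S → A → ℝ) (μ : S → A → ℝ) (s : S) : ℝ := ∑ a, μ s a * Qb s a

/-- Advantage-like function `Ā(s,a) = Q̄(s,a) − Q̄(s,μ)`. -/
def Abar (Qb : S → A → ℝ) (μ : S → A → ℝ) (s : S) (a : A) : ℝ := Qb s a - Qpol Qb μ s

/-- The intervention set `I = {(s,a) ∈ S_safe × A : Ā(s,a) > η}`. -/
def intSet (Qb : S → A → ℝ) (μ : S → A → ℝ) (η : ℝ) (sbad sabs : S) : Set (S × A) :=
  {p | p.1 ≠ sbad ∧ p.1 ≠ sabs ∧ η < Abar Qb μ p.1 p.2}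

/-- The shielded policy `π' = G(π)`. -/
def shield (π μ : S → A → ℝ) (I : Set (S × A)) (sbad sabs : S) : S → A → ℝ :=
  fun s a =>
    if s = sbad ∨ s = sabs then π s a
    else (if (s, a) ∈ I then 0 else π s a)
      + μ s a * (1 - ∑ a', if (s, a') ∈ I then π s a' else 0)

/-- `σ`-admissibility of the intervention rule `(Q̄, μ, η)` (the condition does not
involve `η`): on safe states, `Q̄ ∈ [0,γ]` and
`c(s,a) + γ E_{s'∼P(·|s,a)}[Q̄(s',μ)] ≤ Q̄(s,a) + σ`. -/
def SigmaAdmissible (P : S → A → S → ℝ) (Qb : S → A → ℝ) (μ : S → A → ℝ)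
    (γ σ : ℝ) (sbad sabs : S) : Prop :=
  ∀ s, s ≠ sbad → s ≠ sabs → ∀ a : A,
    (0 ≤ Qb s a ∧ Qb s a ≤ γ) ∧
    cost sbad s a + γ * ∑ s', P s a s' * Qpol Qb μ s' ≤ Qb s a + σ

/-- Transition kernel of the absorbing MDP `M̃`; `none` plays the role of `s_†`. -/
def Ptil (P : S → A → S → ℝ) (I : Set (S × A)) : Option S → A → Option S → ℝ :=
  fun s? a s'? =>
    match s? with
    | none => if s'? = none then 1 else 0
    | some s =>
        if (s, a) ∈ I then (if s'? = none then 1 else 0)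
        else
          match s'? with
          | none => 0
          | some s' => P s a s'

/-- Reward of the absorbing MDP `M̃` with penalty `Rt` on the intervention set. -/
def rtil (r : S → A → ℝ) (I : Set (S × A)) (Rt : ℝ) : Option S → A → ℝ :=
  fun s? a =>
    match s? with
    | none => 0
    | some s => if (s, a) ∈ I then Rt else r s a

/-- Extension of a policy on `S` to `S ∪ {s_†}`, uniform at `s_†`. -/
def extPol (π : S → A → ℝ) : Option S → A → ℝ :=
  fun s? a =>
    match s? with
    | none => (Fintype.card A : ℝ)⁻¹
    | some s => π s a

/-- Extension of an initial distribution on `S` to `S ∪ {s_†}`. -/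
def extDist (d0 : S → ℝ) : Option S → ℝ :=
  fun s? => match s? with | none => 0 | some s => d0 s

/-- `P_G(π)`: discounted probability that a trajectory of `π` in `M` visits `I`. -/
def PG (P : S → A → S → ℝ) (π : S → A → ℝ) (d0 : S → ℝ) (γ : ℝ)
    (I : Set (S × A)) : ℝ :=
  (1 - γ) * ∑' h : ℕ, γ ^ h * eventProb P π d0 h (fun f => ∃ i, f i ∈ I)

/-- The deterministic policy associated to a map `g : S → A`. -/
def detPol (g : S → A) : S → A → ℝ := fun s a => if a = g s then 1 else 0

/-- Bellman optimality operator `T̄` of the cost-based MDP. -/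
def Tbar (P : S → A → S → ℝ) (sbad : S) (γ : ℝ) (Q : S → A → ℝ) : S → A → ℝ :=
  fun s a =>
    cost sbad s a +
      γ * ∑ s', P s a s' * Finset.univ.inf' Finset.univ_nonempty (fun a' => Q s' a')

-- ===== auxiliary =====
def payoff (P : S → A → S → ℝ) (π : S → A → ℝ) (r : S → A → ℝ) (d : S → ℝ) (t : ℕ) : ℝ :=
  ∑ s, ∑ a, distAt P π d t s * π s a * r s a

lemma value_eq_tsum (P : S → A → S → ℝ) (π r : S → A → ℝ) (γ : ℝ) (d : S → ℝ) :
    value P π r γ d = ∑' t : ℕ, γ ^ t * payoff P π r d t := rfl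

lemma distAt_zero (P : S → A → S → ℝ) (π : S → A → ℝ) (d : S → ℝ) :
    distAt P π d 0 = d := rfl

lemma distAt_succ (P : S → A → S → ℝ) (π : S → A → ℝ) (d : S → ℝ) (t : ℕ) :
    distAt P π d (t + 1) = distAt P π (step P π d) t := by
  simp [distAt, Function.iterate_succ_apply]

lemma distAt_succ' (P : S → A → S → ℝ) (π : S → A → ℝ) (d : S → ℝ) (t : ℕ) :
    distAt P π d (t + 1) = step P π (distAt P π d t) := by
  simp [distAt, Function.iterate_succ_apply']

lemma pureDist_isDist (s : S) : IsDist (pureDist s) := by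
  constructor
  · intro s'; unfold pureDist; positivity
  · simp [pureDist]

lemma step_nonneg {P : S → A → S → ℝ} {π : S → A → ℝ} {d : S → ℝ}
    (hP : IsKernel P) (hπ : ∀ s a, 0 ≤ π s a) (hd : ∀ s, 0 ≤ d s) :
    ∀ s', 0 ≤ step P π d s' := by
  intro s'
  apply Finset.sum_nonneg; intro s _
  apply Finset.sum_nonneg; intro a _
  have := (hP s a).1 s'
  have := hπ s a
  have := hd s
  positivity

lemma step_isDist {P : S → A → S → ℝ} {π : S → A → ℝ} {d : S → ℝ}
    (hP : IsKernel P) (hπ : IsPolicy π) (hd : IsDist d) : IsDist (step P π d) := by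
  refine ⟨step_nonneg hP (fun s a => (hπ s).1 a) hd.1, ?_⟩
  unfold step
  rw [Finset.sum_comm]
  have key : ∀ s ∈ Finset.univ, (∑ s' : S, ∑ a, d s * π s a * P s a s') = d s := by
    intro s _
    rw [Finset.sum_comm]
    have h1 : ∀ a ∈ Finset.univ, ∑ s' : S, d s * π s a * P s a s' = d s * π s a := by
      intro a _
      rw [← Finset.mul_sum, (hP s a).2, mul_one]
    rw [Finset.sum_congr rfl h1, ← Finset.mul_sum, (hπ s).2, mul_one]
  rw [Finset.sum_congr rfl key, hd.2]

lemma distAt_nonneg {P : S → A → S → ℝ} {π : S → A → ℝ} {d : S → ℝ}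
    (hP : IsKernel P) (hπ : ∀ s a, 0 ≤ π s a) (hd : ∀ s, 0 ≤ d s) :
    ∀ t s, 0 ≤ distAt P π d t s := by
  intro t
  induction t with
  | zero => exact hd
  | succ t ih => intro s; rw [distAt_succ']; exact step_nonneg hP hπ ih s

lemma distAt_isDist {P : S → A → S → ℝ} {π : S → A → ℝ} {d : S → ℝ}
    (hP : IsKernel P) (hπ : IsPolicy π) (hd : IsDist d) :
    ∀ t, IsDist (distAt P π d t) := by
  intro t
  induction t with
  | zero => exact hd
  | succ t ih => rw [distAt_succ']; exact step_isDist hP hπ ih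

lemma payoff_nonneg {P : S → A → S → ℝ} {π r : S → A → ℝ} {d : S → ℝ}
    (hP : IsKernel P) (hπ : ∀ s a, 0 ≤ π s a) (hd : ∀ s, 0 ≤ d s)
    (hr : ∀ s a, 0 ≤ r s a) (t : ℕ) : 0 ≤ payoff P π r d t := by
  apply Finset.sum_nonneg; intro s _
  apply Finset.sum_nonneg; intro a _
  have := distAt_nonneg hP hπ hd t s
  have := hπ s a; have := hr s a
  positivity

lemma payoff_le_one {P : S → A → S → ℝ} {π r : S → A → ℝ} {d : S → ℝ}
    (hP : IsKernel P) (hπ : IsPolicy π) (hd : IsDist d)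
    (hr : ∀ s a, r s a ≤ 1) (hr0 : ∀ s a, 0 ≤ r s a) (t : ℕ) :
    payoff P π r d t ≤ 1 := by
  have hDist := distAt_isDist hP hπ hd t
  calc payoff P π r d t ≤ ∑ s, ∑ a, distAt P π d t s * π s a * 1 := by
        apply Finset.sum_le_sum; intro s _
        apply Finset.sum_le_sum; intro a _
        have h1 := hDist.1 s; have h2 := (hπ s).1 a
        exact mul_le_mul_of_nonneg_left (hr s a) (by positivity)
    _ = 1 := by
        have : ∀ s ∈ Finset.univ, ∑ a, distAt P π d t s * π s a * 1 = distAt P π d t s := by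
          intro s _
          simp only [mul_one, ← Finset.mul_sum, (hπ s).2]
        rw [Finset.sum_congr rfl this, hDist.2]

lemma payoff_summable {P : S → A → S → ℝ} {π r : S → A → ℝ} {d : S → ℝ} {γ : ℝ}
    (hP : IsKernel P) (hπ : IsPolicy π) (hd : IsDist d)
    (hr : ∀ s a, 0 ≤ r s a) (hr1 : ∀ s a, r s a ≤ 1) (hγ0 : 0 ≤ γ) (hγ1 : γ < 1) :
    Summable (fun t : ℕ => γ ^ t * payoff P π r d t) := by
  apply Summable.of_nonneg_of_le
  · intro t
    have := payoff_nonneg hP (fun s a => (hπ s).1 a) hd.1 hr t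
    positivity
  · intro t
    have h1 := payoff_le_one hP hπ hd hr1 hr t
    calc γ ^ t * payoff P π r d t ≤ γ ^ t * 1 := by
          apply mul_le_mul_of_nonneg_left h1 (by positivity)
      _ = γ ^ t := mul_one _
  · exact summable_geometric_of_lt_one hγ0 hγ1

lemma step_linear (P : S → A → S → ℝ) (π : S → A → ℝ) (c : S → ℝ) (e : S → S → ℝ) :
    step P π (fun x => ∑ s0, c s0 * e s0 x) = fun s' => ∑ s0, c s0 * step P π (e s0) s' := by
  funext s'
  unfold step
  calc ∑ s, ∑ a, (∑ s0, c s0 * e s0 s) * π s a * P s a s'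
      = ∑ s, ∑ s0, c s0 * ∑ a, e s0 s * π s a * P s a s' := by
        refine Finset.sum_congr rfl fun s _ => ?_
        calc ∑ a, (∑ s0, c s0 * e s0 s) * π s a * P s a s'
            = ∑ a, ∑ s0, c s0 * (e s0 s * π s a * P s a s') := by
              refine Finset.sum_congr rfl fun a _ => ?_
              rw [Finset.sum_mul, Finset.sum_mul]
              refine Finset.sum_congr rfl fun s0 _ => by ring
          _ = ∑ s0, ∑ a, c s0 * (e s0 s * π s a * P s a s') := Finset.sum_comm
          _ = ∑ s0, c s0 * ∑ a, e s0 s * π s a * P s a s' := by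
              refine Finset.sum_congr rfl fun s0 _ => (Finset.mul_sum _ _ _).symm
    _ = ∑ s0, ∑ s, c s0 * ∑ a, e s0 s * π s a * P s a s' := Finset.sum_comm
    _ = ∑ s0, c s0 * ∑ s, ∑ a, e s0 s * π s a * P s a s' := by
        refine Finset.sum_congr rfl fun s0 _ => (Finset.mul_sum _ _ _).symm

lemma distAt_linear (P : S → A → S → ℝ) (π : S → A → ℝ) (d : S → ℝ) (t : ℕ) (s' : S) :
    distAt P π d t s' = ∑ s0, d s0 * distAt P π (pureDist s0) t s' := by
  induction t generalizing s' with
  | zero =>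
      simp [distAt_zero, pureDist, mul_ite]
  | succ t ih =>
      rw [distAt_succ']
      have : distAt P π d t = fun x => ∑ s0, d s0 * distAt P π (pureDist s0) t x := by
        funext x; exact ih x
      rw [this, step_linear]
      refine Finset.sum_congr rfl fun s0 _ => ?_
      rw [← distAt_succ']

lemma payoff_linear (P : S → A → S → ℝ) (π r : S → A → ℝ) (d : S → ℝ) (t : ℕ) :
    payoff P π r d t = ∑ s0, d s0 * payoff P π r (pureDist s0) t := by
  unfold payoff
  have h1 : ∀ s ∈ Finset.univ, ∑ a, distAt P π d t s * π s a * r s a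
      = ∑ s0, d s0 * ∑ a, distAt P π (pureDist s0) t s * π s a * r s a := by
    intro s _
    calc ∑ a, distAt P π d t s * π s a * r s a
        = ∑ a, ∑ s0, d s0 * (distAt P π (pureDist s0) t s * π s a * r s a) := by
          refine Finset.sum_congr rfl fun a _ => ?_
          rw [distAt_linear P π d t s, Finset.sum_mul, Finset.sum_mul]
          refine Finset.sum_congr rfl fun s0 _ => by ring
      _ = ∑ s0, ∑ a, d s0 * (distAt P π (pureDist s0) t s * π s a * r s a) :=
          Finset.sum_comm
      _ = ∑ s0, d s0 * ∑ a, distAt P π (pureDist s0) t s * π s a * r s a := by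
          refine Finset.sum_congr rfl fun s0 _ => (Finset.mul_sum _ _ _).symm
  rw [Finset.sum_congr rfl h1, Finset.sum_comm]
  refine Finset.sum_congr rfl fun s0 _ => (Finset.mul_sum _ _ _).symm

lemma value_linear {P : S → A → S → ℝ} {π r : S → A → ℝ} {γ : ℝ}
    (hP : IsKernel P) (hπ : IsPolicy π)
    (hr : ∀ s a, 0 ≤ r s a) (hr1 : ∀ s a, r s a ≤ 1) (hγ0 : 0 ≤ γ) (hγ1 : γ < 1)
    (d : S → ℝ) :
    value P π r γ d = ∑ s0, d s0 * vf P π r γ s0 := by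
  rw [value_eq_tsum]
  have h1 : ∀ t : ℕ, γ ^ t * payoff P π r d t
      = ∑ s0, d s0 * (γ ^ t * payoff P π r (pureDist s0) t) := by
    intro t
    rw [payoff_linear, Finset.mul_sum]
    refine Finset.sum_congr rfl fun s0 _ => by ring
  rw [tsum_congr h1, Summable.tsum_finsetSum (fun s0 _ =>
    Summable.mul_left (d s0)
      (payoff_summable hP hπ (pureDist_isDist s0) hr hr1 hγ0 hγ1))]
  refine Finset.sum_congr rfl fun s0 _ => ?_
  rw [tsum_mul_left]
  rfl

lemma value_one_step {P : S → A → S → ℝ} {π r : S → A → ℝ} {γ : ℝ} {d : S → ℝ}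
    (hP : IsKernel P) (hπ : IsPolicy π) (hd : IsDist d)
    (hr : ∀ s a, 0 ≤ r s a) (hr1 : ∀ s a, r s a ≤ 1) (hγ0 : 0 ≤ γ) (hγ1 : γ < 1) :
    value P π r γ d = payoff P π r d 0 + γ * value P π r γ (step P π d) := by
  rw [value_eq_tsum,
    Summable.tsum_eq_zero_add (payoff_summable hP hπ hd hr hr1 hγ0 hγ1)]
  simp only [pow_zero, one_mul]
  congr 1
  have h1 : ∀ t : ℕ, γ ^ (t + 1) * payoff P π r d (t + 1)
      = γ * (γ ^ t * payoff P π r (step P π d) t) := by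
    intro t
    have hp : payoff P π r d (t + 1) = payoff P π r (step P π d) t := by
      unfold payoff; rw [distAt_succ]
    rw [hp, pow_succ]; ring
  rw [tsum_congr h1, tsum_mul_left, value_eq_tsum]

lemma step_pure (P : S → A → S → ℝ) (π : S → A → ℝ) (s : S) :
    step P π (pureDist s) = fun s' => ∑ a, π s a * P s a s' := by
  funext s'
  simp [step, pureDist, ite_mul, Finset.sum_ite_eq']

lemma payoff_pure_zero (P : S → A → S → ℝ) (π r : S → A → ℝ) (s : S) :
    payoff P π r (pureDist s) 0 = ∑ a, π s a * r s a := by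
  simp [payoff, distAt_zero, pureDist, ite_mul, Finset.sum_ite_eq']

lemma vf_bellman {P : S → A → S → ℝ} {π r : S → A → ℝ} {γ : ℝ}
    (hP : IsKernel P) (hπ : IsPolicy π)
    (hr : ∀ s a, 0 ≤ r s a) (hr1 : ∀ s a, r s a ≤ 1) (hγ0 : 0 ≤ γ) (hγ1 : γ < 1) (s : S) :
    vf P π r γ s = ∑ a, π s a * qf P π r γ s a := by
  have h0 : vf P π r γ s
      = payoff P π r (pureDist s) 0 + γ * value P π r γ (step P π (pureDist s)) :=
    value_one_step hP hπ (pureDist_isDist s) hr hr1 hγ0 hγ1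
  rw [h0, payoff_pure_zero, step_pure,
    value_linear hP hπ hr hr1 hγ0 hγ1]
  unfold qf
  have hR : ∀ a ∈ Finset.univ, π s a * (r s a + γ * ∑ s', P s a s' * vf P π r γ s')
      = π s a * r s a + ∑ s', γ * (π s a * (P s a s' * vf P π r γ s')) := by
    intro a _
    rw [mul_add, Finset.mul_sum, Finset.mul_sum]
    congr 1
    refine Finset.sum_congr rfl fun s' _ => by ring
  rw [Finset.sum_congr rfl hR, Finset.sum_add_distrib]
  congr 1
  rw [Finset.mul_sum, Finset.sum_comm]
  refine Finset.sum_congr rfl fun i _ => ?_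
  rw [Finset.sum_mul, Finset.mul_sum]
  refine Finset.sum_congr rfl fun a _ => by ring

lemma value_nonneg {P : S → A → S → ℝ} {π r : S → A → ℝ} {γ : ℝ} {d : S → ℝ}
    (hP : IsKernel P) (hπ : ∀ s a, 0 ≤ π s a) (hd : ∀ s, 0 ≤ d s)
    (hr : ∀ s a, 0 ≤ r s a) (hγ0 : 0 ≤ γ) :
    0 ≤ value P π r γ d := by
  rw [value_eq_tsum]
  apply tsum_nonneg
  intro t
  have := payoff_nonneg hP hπ hd hr t
  positivity

lemma step_expect (P : S → A → S → ℝ) (π : S → A → ℝ) (e g : S → ℝ) :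
    ∑ s', step P π e s' * g s'
      = ∑ s, ∑ a, e s * π s a * ∑ s', P s a s' * g s' := by
  unfold step
  calc ∑ s', (∑ s, ∑ a, e s * π s a * P s a s') * g s'
      = ∑ s', ∑ s, ∑ a, e s * π s a * (P s a s' * g s') := by
        refine Finset.sum_congr rfl fun s' _ => ?_
        rw [Finset.sum_mul]
        refine Finset.sum_congr rfl fun s _ => ?_
        rw [Finset.sum_mul]
        refine Finset.sum_congr rfl fun a _ => by ring
    _ = ∑ s, ∑ s', ∑ a, e s * π s a * (P s a s' * g s') := Finset.sum_comm
    _ = ∑ s, ∑ a, ∑ s', e s * π s a * (P s a s' * g s') := by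
        refine Finset.sum_congr rfl fun s _ => Finset.sum_comm
    _ = ∑ s, ∑ a, e s * π s a * ∑ s', P s a s' * g s' := by
        refine Finset.sum_congr rfl fun s _ => Finset.sum_congr rfl fun a _ =>
          (Finset.mul_sum _ _ _).symm

/-- Supersolution comparison: if `g ≥ 0` dominates its one-step backup under `π`,
then the value of `π` from any nonnegative `d` is at most `∑ d g`. -/
lemma value_le_of_super {P : S → A → S → ℝ} {π r : S → A → ℝ} {γ : ℝ} {d : S → ℝ}
    (hP : IsKernel P) (hπ : ∀ s a, 0 ≤ π s a) (hd : ∀ s, 0 ≤ d s)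
    (hr : ∀ s a, 0 ≤ r s a) (hγ0 : 0 ≤ γ)
    (g : S → ℝ) (hg0 : ∀ s, 0 ≤ g s)
    (hsup : ∀ s, ∑ a, π s a * (r s a + γ * ∑ s', P s a s' * g s') ≤ g s) :
    value P π r γ d ≤ ∑ s, d s * g s := by
  have core : ∀ e : S → ℝ, (∀ s, 0 ≤ e s) →
      (∑ s, ∑ a, e s * π s a * r s a) + γ * ∑ s', step P π e s' * g s'
        ≤ ∑ s, e s * g s := by
    intro e he
    rw [step_expect]
    have h2 : (∑ s, ∑ a, e s * π s a * r s a)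
        + γ * ∑ s, ∑ a, e s * π s a * ∑ s', P s a s' * g s'
        = ∑ s, e s * ∑ a, π s a * (r s a + γ * ∑ s', P s a s' * g s') := by
      rw [Finset.mul_sum, ← Finset.sum_add_distrib]
      refine Finset.sum_congr rfl fun s _ => ?_
      calc (∑ a, e s * π s a * r s a) + γ * ∑ a, e s * π s a * ∑ s', P s a s' * g s'
          = ∑ a, (e s * π s a * r s a
              + γ * (e s * π s a * ∑ s', P s a s' * g s')) := by
            rw [Finset.sum_add_distrib, Finset.mul_sum]
        _ = ∑ a, e s * (π s a * (r s a + γ * ∑ s', P s a s' * g s')) := by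
            refine Finset.sum_congr rfl fun a _ => by ring
        _ = e s * ∑ a, π s a * (r s a + γ * ∑ s', P s a s' * g s') :=
            (Finset.mul_sum _ _ _).symm
    rw [h2]
    exact Finset.sum_le_sum fun s _ => mul_le_mul_of_nonneg_left (hsup s) (he s)
  have key : ∀ n : ℕ,
      (∑ t ∈ Finset.range n, γ ^ t * payoff P π r d t)
        + γ ^ n * ∑ s, distAt P π d n s * g s ≤ ∑ s, d s * g s := by
    intro n
    induction n with
    | zero => simp [distAt_zero]
    | succ n ih =>
        refine le_trans ?_ ih
        rw [Finset.sum_range_succ, add_assoc]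
        refine add_le_add le_rfl ?_
        have hc : payoff P π r d n + γ * ∑ s, distAt P π d (n + 1) s * g s
            ≤ ∑ s, distAt P π d n s * g s := by
          rw [distAt_succ']
          exact core (distAt P π d n) (distAt_nonneg hP hπ hd n)
        calc γ ^ n * payoff P π r d n + γ ^ (n + 1) * ∑ s, distAt P π d (n + 1) s * g s
            = γ ^ n * (payoff P π r d n + γ * ∑ s, distAt P π d (n + 1) s * g s) := by
              rw [pow_succ]; ring
          _ ≤ γ ^ n * ∑ s, distAt P π d n s * g s :=
              mul_le_mul_of_nonneg_left hc (by positivity)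
  have hterm : ∀ t : ℕ, 0 ≤ γ ^ t * payoff P π r d t := by
    intro t
    have := payoff_nonneg hP hπ hd hr t
    positivity
  rw [value_eq_tsum]
  apply Real.tsum_le_of_sum_range_le hterm
  intro n
  refine le_trans ?_ (key n)
  have : 0 ≤ γ ^ n * ∑ s, distAt P π d n s * g s := by
    have h3 : 0 ≤ ∑ s, distAt P π d n s * g s :=
      Finset.sum_nonneg fun s _ =>
        mul_nonneg (distAt_nonneg hP hπ hd n s) (hg0 s)
    positivity
  linarith

lemma distAt_pure_absorbing {P : S → A → S → ℝ} {π : S → A → ℝ} {sabs : S}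
    (hπ : IsPolicy π) (hPabs : ∀ a, P sabs a = pureDist sabs) (t : ℕ) :
    distAt P π (pureDist sabs) t = pureDist sabs := by
  induction t with
  | zero => rfl
  | succ t ih =>
      rw [distAt_succ', ih, step_pure]
      funext s'
      have : ∀ a ∈ Finset.univ, π sabs a * P sabs a s' = π sabs a * pureDist sabs s' := by
        intro a _; rw [hPabs a]
      rw [Finset.sum_congr rfl this, ← Finset.sum_mul, (hπ sabs).2, one_mul]

lemma vf_sabs {P : S → A → S → ℝ} {π : S → A → ℝ} {γ : ℝ} {sbad sabs : S}
    (hπ : IsPolicy π) (hPabs : ∀ a, P sabs a = pureDist sabs) (hne : sbad ≠ sabs) :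
    vf P π (cost sbad) γ sabs = 0 := by
  unfold vf
  rw [value_eq_tsum]
  have : ∀ t : ℕ, γ ^ t * payoff P π (cost sbad) (pureDist sabs) t = 0 := by
    intro t
    unfold payoff
    rw [distAt_pure_absorbing hπ hPabs]
    have : ∀ s ∈ Finset.univ, ∑ a : A, pureDist sabs s * π s a * cost sbad s a = 0 := by
      intro s _
      apply Finset.sum_eq_zero
      intro a _
      unfold pureDist cost
      rcases eq_or_ne s sabs with h | h
      · simp [h, (hne.symm : sabs ≠ sbad)]
      · simp [h]
    rw [Finset.sum_congr rfl this]
    simp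
  rw [tsum_congr this, tsum_zero]

lemma vf_sbad {P : S → A → S → ℝ} {π : S → A → ℝ} {γ : ℝ} {sbad sabs : S}
    (hP : IsKernel P) (hπ : IsPolicy π) (hγ0 : 0 ≤ γ) (hγ1 : γ < 1)
    (hPbad : ∀ a, P sbad a = pureDist sabs)
    (hPabs : ∀ a, P sabs a = pureDist sabs) (hne : sbad ≠ sabs) :
    vf P π (cost sbad) γ sbad = 1 := by
  have hr : ∀ (s : S) (a : A), 0 ≤ cost sbad s a := by
    intro s a; unfold cost; positivity
  have hr1 : ∀ (s : S) (a : A), cost sbad s a ≤ 1 := by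
    intro s a; unfold cost; split <;> norm_num
  have h0 : vf P π (cost sbad) γ sbad
      = payoff P π (cost sbad) (pureDist sbad) 0
        + γ * value P π (cost sbad) γ (step P π (pureDist sbad)) :=
    value_one_step hP hπ (pureDist_isDist sbad) hr hr1 hγ0 hγ1
  have h1 : payoff P π (cost sbad) (pureDist sbad) 0 = 1 := by
    rw [payoff_pure_zero]
    have : ∀ a ∈ Finset.univ, π sbad a * cost sbad sbad a = π sbad a := by
      intro a _; simp [cost]
    rw [Finset.sum_congr rfl this, (hπ sbad).2]
  have h2 : step P π (pureDist sbad) = pureDist sabs := by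
    rw [step_pure]
    funext s'
    have : ∀ a ∈ Finset.univ, π sbad a * P sbad a s' = π sbad a * pureDist sabs s' := by
      intro a _; rw [hPbad a]
    rw [Finset.sum_congr rfl this, ← Finset.sum_mul, (hπ sbad).2, one_mul]
  rw [h0, h1, h2]
  have h3 : value P π (cost sbad) γ (pureDist sabs) = 0 := vf_sabs hπ hPabs hne
  rw [h3, mul_zero, add_zero]

lemma cost_nonneg (sbad : S) : ∀ (s : S) (a : A), 0 ≤ cost sbad s a := by
  intro s a; unfold cost; positivity

lemma cost_le_one (sbad : S) : ∀ (s : S) (a : A), cost sbad s a ≤ 1 := by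
  intro s a; unfold cost; split <;> norm_num

lemma pos_parts {x y : ℝ} (hx : 0 ≤ x) (hy : 0 ≤ y) (h : 0 < x * y) : 0 < x ∧ 0 < y := by
  constructor
  · rcases hx.eq_or_lt with h0 | h0
    · exfalso; rw [← h0, zero_mul] at h; exact lt_irrefl 0 h
    · exact h0
  · rcases hy.eq_or_lt with h0 | h0
    · exfalso; rw [← h0, mul_zero] at h; exact lt_irrefl 0 h
    · exact h0

lemma detPol_isPolicy (g : S → A) : IsPolicy (detPol g) := by
  intro s
  constructor
  · intro a; unfold detPol; positivity
  · simp [detPol]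

/-- Bellman optimality: the optimal value is dominated by every Q-factor. -/
lemma vstar_le_qf {P : S → A → S → ℝ} {πstar : S → A → ℝ} {γ : ℝ} {sbad : S}
    (hP : IsKernel P) (hγ0 : 0 ≤ γ) (hγ1 : γ < 1)
    (hπstar : IsPolicy πstar)
    (hopt : ∀ π', IsPolicy π' → ∀ s,
      vf P πstar (cost sbad) γ s ≤ vf P π' (cost sbad) γ s) :
    ∀ s a, vf P πstar (cost sbad) γ s ≤ qf P πstar (cost sbad) γ s a := by
  have hr := cost_nonneg (A := A) sbad
  have hr1 := cost_le_one (A := A) sbad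
  have hmin : ∀ s : S, ∃ a, ∀ b, qf P πstar (cost sbad) γ s a ≤ qf P πstar (cost sbad) γ s b := by
    intro s
    obtain ⟨a, -, ha⟩ := Finset.exists_min_image Finset.univ
      (fun a => qf P πstar (cost sbad) γ s a) ⟨Classical.arbitrary A, Finset.mem_univ _⟩
    exact ⟨a, fun b => ha b (Finset.mem_univ b)⟩
  set a0 : S → A := fun s => (hmin s).choose with ha0def
  have ha0 : ∀ s b, qf P πstar (cost sbad) γ s (a0 s) ≤ qf P πstar (cost sbad) γ s b :=
    fun s => (hmin s).choose_spec
  set πg := detPol a0 with hπgdef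
  have hπg : IsPolicy πg := detPol_isPolicy a0
  have hvstar0 : ∀ s, 0 ≤ vf P πstar (cost sbad) γ s := fun s =>
    value_nonneg hP (fun s a => (hπstar s).1 a) (pureDist_isDist s).1 hr hγ0
  have hsup : ∀ s, ∑ a, πg s a *
      (cost sbad s a + γ * ∑ s', P s a s' * vf P πstar (cost sbad) γ s')
        ≤ vf P πstar (cost sbad) γ s := by
    intro s
    have h1 : ∑ a, πg s a *
        (cost sbad s a + γ * ∑ s', P s a s' * vf P πstar (cost sbad) γ s')
          = qf P πstar (cost sbad) γ s (a0 s) := by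
      simp [hπgdef, detPol, ite_mul, Finset.sum_ite_eq', qf]
    rw [h1]
    have h2 : vf P πstar (cost sbad) γ s = ∑ a, πstar s a * qf P πstar (cost sbad) γ s a :=
      vf_bellman hP hπstar hr hr1 hγ0 hγ1 s
    rw [h2]
    calc qf P πstar (cost sbad) γ s (a0 s)
        = ∑ a, πstar s a * qf P πstar (cost sbad) γ s (a0 s) := by
          rw [← Finset.sum_mul, (hπstar s).2, one_mul]
      _ ≤ ∑ a, πstar s a * qf P πstar (cost sbad) γ s a :=
          Finset.sum_le_sum fun a _ =>
            mul_le_mul_of_nonneg_left (ha0 s a) ((hπstar s).1 a)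
  have hvg_le : ∀ s, vf P πg (cost sbad) γ s ≤ vf P πstar (cost sbad) γ s := by
    intro s
    have := value_le_of_super (d := pureDist s) hP (fun s a => (hπg s).1 a)
      (pureDist_isDist s).1 hr hγ0 (vf P πstar (cost sbad) γ) hvstar0 hsup
    calc vf P πg (cost sbad) γ s = value P πg (cost sbad) γ (pureDist s) := rfl
      _ ≤ ∑ x, pureDist s x * vf P πstar (cost sbad) γ x := this
      _ = vf P πstar (cost sbad) γ s := by
          simp [pureDist, ite_mul, Finset.sum_ite_eq']
  have hveq : ∀ s, vf P πg (cost sbad) γ s = vf P πstar (cost sbad) γ s :=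
    fun s => le_antisymm (hvg_le s) (hopt πg hπg s)
  intro s a
  have h3 : vf P πg (cost sbad) γ s = ∑ b, πg s b * qf P πg (cost sbad) γ s b :=
    vf_bellman hP hπg hr hr1 hγ0 hγ1 s
  have h4 : ∑ b, πg s b * qf P πg (cost sbad) γ s b = qf P πg (cost sbad) γ s (a0 s) := by
    simp [hπgdef, detPol, ite_mul, Finset.sum_ite_eq']
  have h5 : qf P πg (cost sbad) γ s (a0 s) = qf P πstar (cost sbad) γ s (a0 s) := by
    unfold qf
    congr 1
    rw [mul_eq_mul_left_iff]
    left
    refine Finset.sum_congr rfl fun s' _ => ?_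
    rw [hveq s']
  calc vf P πstar (cost sbad) γ s = vf P πg (cost sbad) γ s := (hveq s).symm
    _ = qf P πstar (cost sbad) γ s (a0 s) := by rw [h3, h4, h5]
    _ ≤ qf P πstar (cost sbad) γ s a := ha0 s a

section Adm

variable {P : S → A → S → ℝ} {γ : ℝ} {sbad sabs : S} {πstar Qb μ : S → A → ℝ}

lemma Qpol_bad (hμ : IsPolicy μ) (hQbad : ∀ a : A, Qb sbad a = 1) :
    Qpol Qb μ sbad = 1 := by
  unfold Qpol
  rw [Finset.sum_congr rfl (fun a _ => by rw [hQbad a, mul_one]), (hμ sbad).2]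

lemma Qpol_abs (hQabs : ∀ a : A, Qb sabs a = 0) :
    Qpol Qb μ sabs = 0 := by
  unfold Qpol
  exact Finset.sum_eq_zero fun a _ => by rw [hQabs a, mul_zero]

lemma Qpol_nonneg (hγ0 : 0 ≤ γ) (hμ : IsPolicy μ)
    (hQbad : ∀ a : A, Qb sbad a = 1) (hQabs : ∀ a : A, Qb sabs a = 0)
    (hadm : SigmaAdmissible P Qb μ γ 0 sbad sabs) :
    ∀ s, 0 ≤ Qpol Qb μ s := by
  intro s
  by_cases h1 : s = sbad
  · rw [h1, Qpol_bad hμ hQbad]; norm_num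
  by_cases h2 : s = sabs
  · rw [h2, Qpol_abs hQabs]
  apply Finset.sum_nonneg
  intro a _
  exact mul_nonneg ((hμ s).1 a) ((hadm s h1 h2 a).1.1)

lemma Qpol_super (hP : IsKernel P) (hγ0 : 0 ≤ γ) (hne : sbad ≠ sabs)
    (hPbad : ∀ a : A, P sbad a = pureDist sabs)
    (hPabs : ∀ a : A, P sabs a = pureDist sabs)
    (hμ : IsPolicy μ)
    (hQbad : ∀ a : A, Qb sbad a = 1) (hQabs : ∀ a : A, Qb sabs a = 0)
    (hadm : SigmaAdmissible P Qb μ γ 0 sbad sabs) :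
    ∀ s, ∑ a, μ s a * (cost sbad s a + γ * ∑ s', P s a s' * Qpol Qb μ s')
      ≤ Qpol Qb μ s := by
  intro s
  by_cases h1 : s = sbad
  · rw [h1]
    have hterm : ∀ a ∈ Finset.univ,
        μ sbad a * (cost sbad sbad a + γ * ∑ s', P sbad a s' * Qpol Qb μ s')
          = μ sbad a := by
      intro a _
      rw [hPbad a]
      have : ∑ s', pureDist sabs s' * Qpol Qb μ s' = Qpol Qb μ sabs := by
        simp [pureDist, ite_mul, Finset.sum_ite_eq']
      rw [this, Qpol_abs hQabs, mul_zero, add_zero]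
      simp [cost]
    rw [Finset.sum_congr rfl hterm, (hμ sbad).2, Qpol_bad hμ hQbad]
  by_cases h2 : s = sabs
  · rw [h2]
    have hterm : ∀ a ∈ Finset.univ,
        μ sabs a * (cost sbad sabs a + γ * ∑ s', P sabs a s' * Qpol Qb μ s')
          = 0 := by
      intro a _
      rw [hPabs a]
      have : ∑ s', pureDist sabs s' * Qpol Qb μ s' = Qpol Qb μ sabs := by
        simp [pureDist, ite_mul, Finset.sum_ite_eq']
      rw [this, Qpol_abs hQabs, mul_zero, add_zero]
      have : cost sbad sabs a = 0 := by simp [cost, Ne.symm hne]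
      rw [this, mul_zero]
    rw [Finset.sum_congr rfl hterm]
    simp [Qpol_abs hQabs]
  calc ∑ a, μ s a * (cost sbad s a + γ * ∑ s', P s a s' * Qpol Qb μ s')
      ≤ ∑ a, μ s a * Qb s a := by
        apply Finset.sum_le_sum
        intro a _
        apply mul_le_mul_of_nonneg_left _ ((hμ s).1 a)
        have := (hadm s h1 h2 a).2
        linarith
    _ = Qpol Qb μ s := rfl

lemma vstar_le_Qpol (hP : IsKernel P) (hγ0 : 0 ≤ γ) (hγ1 : γ < 1) (hne : sbad ≠ sabs)
    (hPbad : ∀ a : A, P sbad a = pureDist sabs)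
    (hPabs : ∀ a : A, P sabs a = pureDist sabs)
    (hμ : IsPolicy μ)
    (hopt : ∀ π', IsPolicy π' → ∀ s,
      vf P πstar (cost sbad) γ s ≤ vf P π' (cost sbad) γ s)
    (hQbad : ∀ a : A, Qb sbad a = 1) (hQabs : ∀ a : A, Qb sabs a = 0)
    (hadm : SigmaAdmissible P Qb μ γ 0 sbad sabs) :
    ∀ s, vf P πstar (cost sbad) γ s ≤ Qpol Qb μ s := by
  intro s
  refine le_trans (hopt μ hμ s) ?_
  have := value_le_of_super (d := pureDist s) hP (fun s a => (hμ s).1 a)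
    (pureDist_isDist s).1 (cost_nonneg sbad) hγ0 (Qpol Qb μ)
    (Qpol_nonneg hγ0 hμ hQbad hQabs hadm)
    (Qpol_super hP hγ0 hne hPbad hPabs hμ hQbad hQabs hadm)
  calc vf P μ (cost sbad) γ s = value P μ (cost sbad) γ (pureDist s) := rfl
    _ ≤ ∑ x, pureDist s x * Qpol Qb μ x := this
    _ = Qpol Qb μ s := by simp [pureDist, ite_mul, Finset.sum_ite_eq']

lemma qf_le_Qb (hP : IsKernel P) (hγ0 : 0 ≤ γ) (hγ1 : γ < 1) (hne : sbad ≠ sabs)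
    (hPbad : ∀ a : A, P sbad a = pureDist sabs)
    (hPabs : ∀ a : A, P sabs a = pureDist sabs)
    (hπstar : IsPolicy πstar) (hμ : IsPolicy μ)
    (hopt : ∀ π', IsPolicy π' → ∀ s,
      vf P πstar (cost sbad) γ s ≤ vf P π' (cost sbad) γ s)
    (hQbad : ∀ a : A, Qb sbad a = 1) (hQabs : ∀ a : A, Qb sabs a = 0)
    (hadm : SigmaAdmissible P Qb μ γ 0 sbad sabs) :
    ∀ s a, qf P πstar (cost sbad) γ s a ≤ Qb s a := by
  intro s a
  have hvabs : vf P πstar (cost sbad) γ sabs = 0 := vf_sabs hπstar hPabs hne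
  by_cases h1 : s = sbad
  · rw [h1]
    unfold qf
    rw [hPbad a]
    have : ∑ s', pureDist sabs s' * vf P πstar (cost sbad) γ s'
        = vf P πstar (cost sbad) γ sabs := by
      simp [pureDist, ite_mul, Finset.sum_ite_eq']
    rw [this, hvabs, mul_zero, add_zero, hQbad a]
    simp [cost]
  by_cases h2 : s = sabs
  · rw [h2]
    unfold qf
    rw [hPabs a]
    have : ∑ s', pureDist sabs s' * vf P πstar (cost sbad) γ s'
        = vf P πstar (cost sbad) γ sabs := by
      simp [pureDist, ite_mul, Finset.sum_ite_eq']
    rw [this, hvabs, mul_zero, add_zero, hQabs a]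
    simp [cost, Ne.symm hne]
  have hstep : ∑ s', P s a s' * vf P πstar (cost sbad) γ s'
      ≤ ∑ s', P s a s' * Qpol Qb μ s' := by
    apply Finset.sum_le_sum
    intro s' _
    exact mul_le_mul_of_nonneg_left
      (vstar_le_Qpol hP hγ0 hγ1 hne hPbad hPabs hμ hopt hQbad hQabs hadm s')
      ((hP s a).1 s')
  have := (hadm s h1 h2 a).2
  unfold qf
  nlinarith [hγ0, hstep]

end Adm

/-- on the support of `d^{π'}` the advantage `Ā` of an admissible rule
whose initial value matches `V̄*(d₀)` dominates the optimal advantage `Ā*`. -/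
theorem stmt_9
    (P : S → A → S → ℝ) (γ : ℝ) (sbad sabs : S) (d0 : S → ℝ)
    (πstar Qb π μ : S → A → ℝ)
    (hP : IsKernel P) (hγ0 : 0 ≤ γ) (hγ1 : γ < 1)
    (hne : sbad ≠ sabs)
    (hPbad : ∀ a, P sbad a = pureDist sabs)
    (hPabs : ∀ a, P sabs a = pureDist sabs)
    (hd0 : IsDist d0)
    (hπstar : IsPolicy πstar)
    (hopt : ∀ π', IsPolicy π' → ∀ s,
      vf P πstar (cost sbad) γ s ≤ vf P π' (cost sbad) γ s)
    (hπ : IsPolicy π) (hμ : IsPolicy μ)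
    (hQbad : ∀ a : A, Qb sbad a = 1) (hQabs : ∀ a : A, Qb sabs a = 0)
    (hadm : SigmaAdmissible P Qb μ γ 0 sbad sabs)
    (hinit : ∑ s, d0 s * Qpol Qb μ s = ∑ s, d0 s * vf P πstar (cost sbad) γ s) :
    ∀ s, 0 < dsd P (shield π μ (intSet Qb μ 0 sbad sabs) sbad sabs) γ d0 s →
      ∀ a : A,
        qf P πstar (cost sbad) γ s a - Qpol (qf P πstar (cost sbad) γ) πstar s
          ≤ Abar Qb μ s a := by
  classical
  set I := intSet Qb μ 0 sbad sabs with hIdef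
  set π' := shield π μ I sbad sabs with hπ'def
  have hr := cost_nonneg (A := A) sbad
  have hr1 := cost_le_one (A := A) sbad
  have hQle : ∀ s a, qf P πstar (cost sbad) γ s a ≤ Qb s a :=
    qf_le_Qb hP hγ0 hγ1 hne hPbad hPabs hπstar hμ hopt hQbad hQabs hadm
  have hvq : ∀ s a, vf P πstar (cost sbad) γ s ≤ qf P πstar (cost sbad) γ s a :=
    vstar_le_qf hP hγ0 hγ1 hπstar hopt
  have hvG : ∀ s, vf P πstar (cost sbad) γ s ≤ Qpol Qb μ s :=
    vstar_le_Qpol hP hγ0 hγ1 hne hPbad hPabs hμ hopt hQbad hQabs hadm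
  have hw : ∀ s : S, 0 ≤ 1 - ∑ a', if (s, a') ∈ I then π s a' else 0 := by
    intro s
    have hle : (∑ a', if (s, a') ∈ I then π s a' else 0) ≤ ∑ a', π s a' := by
      apply Finset.sum_le_sum
      intro a' _
      split
      · exact le_refl _
      · exact (hπ s).1 a'
    rw [(hπ s).2] at hle
    linarith
  have hπ'0 : ∀ s a, 0 ≤ π' s a := by
    intro s a
    rw [hπ'def]
    unfold shield
    split
    · exact (hπ s).1 a
    · have h1 : (0:ℝ) ≤ if (s, a) ∈ I then 0 else π s a := by
        split
        · exact le_refl 0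
        · exact (hπ s).1 a
      have h2 := mul_nonneg ((hμ s).1 a) (hw s)
      linarith
  -- the key pointwise propagation step
  have hKL : 0 < γ → ∀ s, Qpol Qb μ s = vf P πstar (cost sbad) γ s →
      ∀ a, 0 < π' s a → ∀ s', 0 < P s a s' →
      Qpol Qb μ s' = vf P πstar (cost sbad) γ s' := by
    intro hγpos s hGs a hπ'a s' hPs'
    have habs : Qpol Qb μ sabs = vf P πstar (cost sbad) γ sabs := by
      rw [Qpol_abs hQabs, vf_sabs hπstar hPabs hne]
    by_cases h1 : s = sbad
    · have hip : P s a s' = pureDist sabs s' := by rw [h1, hPbad a]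
      rw [hip] at hPs'
      have hs' : s' = sabs := by
        by_contra hc
        rw [pureDist, if_neg hc] at hPs'
        exact lt_irrefl 0 hPs'
      rw [hs']
      exact habs
    by_cases h2 : s = sabs
    · have hip : P s a s' = pureDist sabs s' := by rw [h2, hPabs a]
      rw [hip] at hPs'
      have hs' : s' = sabs := by
        by_contra hc
        rw [pureDist, if_neg hc] at hPs'
        exact lt_irrefl 0 hPs'
      rw [hs']
      exact habs
    -- s is safe
    have hQbGs : Qb s a ≤ Qpol Qb μ s := by
      have hexpand : π' s a = (if (s, a) ∈ I then 0 else π s a)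
          + μ s a * (1 - ∑ a', if (s, a') ∈ I then π s a' else 0) := by
        rw [hπ'def]
        unfold shield
        rw [if_neg (by tauto)]
      rw [hexpand] at hπ'a
      have t1 : (0:ℝ) ≤ if (s, a) ∈ I then 0 else π s a := by
        split
        · exact le_refl 0
        · exact (hπ s).1 a
      have t2 : 0 ≤ μ s a * (1 - ∑ a', if (s, a') ∈ I then π s a' else 0) :=
        mul_nonneg ((hμ s).1 a) (hw s)
      have hcases : (0 < if (s, a) ∈ I then (0:ℝ) else π s a)
          ∨ 0 < μ s a * (1 - ∑ a', if (s, a') ∈ I then π s a' else 0) := by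
        by_contra hc
        push_neg at hc
        linarith [hc.1, hc.2]
      rcases hcases with hc1 | hc2
      · have hnotI : (s, a) ∉ I := by
          intro hmem
          rw [if_pos hmem] at hc1
          exact lt_irrefl 0 hc1
        have hA : ¬ (0 < Abar Qb μ s a) := fun hA => hnotI ⟨h1, h2, hA⟩
        unfold Abar at hA
        push_neg at hA
        linarith
      · have hμpos : 0 < μ s a :=
          (pos_parts ((hμ s).1 a) (hw s) hc2).1
        have hterm0 : ∀ b ∈ Finset.univ, 0 ≤ μ s b * (Qb s b - Qpol Qb μ s) := by
          intro b _
          apply mul_nonneg ((hμ s).1 b)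
          have := le_trans (hvq s b) (hQle s b)
          rw [← hGs] at this
          linarith
        have hsum0 : ∑ b, μ s b * (Qb s b - Qpol Qb μ s) = 0 := by
          have hexp : ∑ b, μ s b * (Qb s b - Qpol Qb μ s)
              = (∑ b, μ s b * Qb s b) - (∑ b, μ s b) * Qpol Qb μ s := by
            rw [Finset.sum_mul, ← Finset.sum_sub_distrib]
            refine Finset.sum_congr rfl fun b _ => by ring
          rw [hexp, (hμ s).2, one_mul]
          have : (∑ b, μ s b * Qb s b) = Qpol Qb μ s := rfl
          rw [this, sub_self]
        have hz := (Finset.sum_eq_zero_iff_of_nonneg hterm0).mp hsum0 a (Finset.mem_univ a)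
        rcases mul_eq_zero.mp hz with h | h
        · exact absurd h (ne_of_gt hμpos)
        · linarith
    -- now all the inequalities collapse
    have e1 : Qb s a = Qpol Qb μ s := by
      have h := le_trans (hvq s a) (hQle s a)
      rw [← hGs] at h
      exact le_antisymm hQbGs h
    have e2 : qf P πstar (cost sbad) γ s a = Qb s a := by
      refine le_antisymm (hQle s a) ?_
      rw [e1, hGs]
      exact hvq s a
    have hadm2 := (hadm s h1 h2 a).2
    rw [add_zero] at hadm2
    have e3 : cost sbad s a + γ * ∑ x, P s a x * vf P πstar (cost sbad) γ x = Qb s a := by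
      rw [← e2]; rfl
    have hsum_le : ∑ x, P s a x * Qpol Qb μ x
        ≤ ∑ x, P s a x * vf P πstar (cost sbad) γ x := by
      have hmul : γ * ∑ x, P s a x * Qpol Qb μ x
          ≤ γ * ∑ x, P s a x * vf P πstar (cost sbad) γ x := by linarith
      exact le_of_mul_le_mul_left hmul hγpos
    have hterms : ∀ x ∈ Finset.univ,
        0 ≤ P s a x * (Qpol Qb μ x - vf P πstar (cost sbad) γ x) := by
      intro x _
      exact mul_nonneg ((hP s a).1 x) (by linarith [hvG x])
    have hzero : ∑ x, P s a x * (Qpol Qb μ x - vf P πstar (cost sbad) γ x) = 0 := by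
      have hexp : ∑ x, P s a x * (Qpol Qb μ x - vf P πstar (cost sbad) γ x)
          = (∑ x, P s a x * Qpol Qb μ x)
            - ∑ x, P s a x * vf P πstar (cost sbad) γ x := by
        rw [← Finset.sum_sub_distrib]
        refine Finset.sum_congr rfl fun x _ => by ring
      have hnn : 0 ≤ ∑ x, P s a x * (Qpol Qb μ x - vf P πstar (cost sbad) γ x) :=
        Finset.sum_nonneg hterms
      rw [hexp] at hnn ⊢
      linarith
    have hz := (Finset.sum_eq_zero_iff_of_nonneg hterms).mp hzero s' (Finset.mem_univ s')
    rcases mul_eq_zero.mp hz with h | h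
    · exact absurd h (ne_of_gt hPs')
    · linarith
  -- propagation along time
  have hC : ∀ t : ℕ, (0 < γ ∨ t = 0) → ∀ s, 0 < distAt P π' d0 t s →
      Qpol Qb μ s = vf P πstar (cost sbad) γ s := by
    intro t
    induction t with
    | zero =>
        intro _ s hs
        have hterm : ∀ x ∈ Finset.univ,
            0 ≤ d0 x * (Qpol Qb μ x - vf P πstar (cost sbad) γ x) := by
          intro x _
          exact mul_nonneg (hd0.1 x) (by linarith [hvG x])
        have hsum0 : ∑ x, d0 x * (Qpol Qb μ x - vf P πstar (cost sbad) γ x) = 0 := by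
          have hexp : ∑ x, d0 x * (Qpol Qb μ x - vf P πstar (cost sbad) γ x)
              = (∑ x, d0 x * Qpol Qb μ x)
                - ∑ x, d0 x * vf P πstar (cost sbad) γ x := by
            rw [← Finset.sum_sub_distrib]
            refine Finset.sum_congr rfl fun x _ => by ring
          rw [hexp, hinit, sub_self]
        have hz := (Finset.sum_eq_zero_iff_of_nonneg hterm).mp hsum0 s (Finset.mem_univ s)
        rw [distAt_zero] at hs
        rcases mul_eq_zero.mp hz with h | h
        · exact absurd h (ne_of_gt hs)
        · linarith
    | succ t ih =>
        intro hγor s' hs'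
        have hγpos : 0 < γ := by
          rcases hγor with h | h
          · exact h
          · exact absurd h (Nat.succ_ne_zero t)
        rw [distAt_succ'] at hs'
        have h0 : (∑ x : S, (0:ℝ)) < ∑ x, ∑ a, distAt P π' d0 t x * π' x a * P x a s' := by
          simpa [step] using hs'
        obtain ⟨s, -, hsum⟩ := Finset.exists_lt_of_sum_lt h0
        have h0' : (∑ a : A, (0:ℝ)) < ∑ a, distAt P π' d0 t s * π' s a * P s a s' := by
          simpa using hsum
        obtain ⟨a, -, hterm⟩ := Finset.exists_lt_of_sum_lt h0'
        have hdnn := distAt_nonneg hP hπ'0 hd0.1 t s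
        have hp1 := pos_parts (mul_nonneg hdnn (hπ'0 s a)) ((hP s a).1 s') hterm
        have hp2 := pos_parts hdnn (hπ'0 s a) hp1.1
        exact hKL hγpos s (ih (Or.inl hγpos) s hp2.1) a hp2.2 s' hp1.2
  intro s hs a
  unfold dsd at hs
  have h1γ : 0 < 1 - γ := by linarith
  have hterm_nn : ∀ t : ℕ, 0 ≤ γ ^ t * distAt P π' d0 t s := fun t =>
    mul_nonneg (pow_nonneg hγ0 t) (distAt_nonneg hP hπ'0 hd0.1 t s)
  have hT : 0 < ∑' t : ℕ, γ ^ t * distAt P π' d0 t s := by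
    by_contra hc
    push_neg at hc
    nlinarith
  have hex : ∃ t : ℕ, 0 < γ ^ t * distAt P π' d0 t s := by
    by_contra hc
    push_neg at hc
    have hall : ∀ t : ℕ, γ ^ t * distAt P π' d0 t s = 0 := fun t =>
      le_antisymm (hc t) (hterm_nn t)
    rw [tsum_congr hall, tsum_zero] at hT
    exact lt_irrefl 0 hT
  obtain ⟨t, ht⟩ := hex
  obtain ⟨hpow, hdt⟩ := pos_parts (pow_nonneg hγ0 t)
    (distAt_nonneg hP hπ'0 hd0.1 t s) ht
  have hγor : 0 < γ ∨ t = 0 := by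
    cases t with
    | zero => exact Or.inr rfl
    | succ n =>
        left
        rcases hγ0.eq_or_lt with h | h
        · rw [← h] at hpow
          simp at hpow
        · exact h
  have hGs : Qpol Qb μ s = vf P πstar (cost sbad) γ s := hC t hγor s hdt
  have hbell : Qpol (qf P πstar (cost sbad) γ) πstar s = vf P πstar (cost sbad) γ s := by
    unfold Qpol
    exact (vf_bellman hP hπstar hr hr1 hγ0 hγ1 s).symm
  unfold Abar
  rw [hbell, hGs]
  have := hQle s a
  linarith

end SafeRL
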